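/- Let 𝔸 = (A, R_1, …, R_n) and 𝔹 = (A, S_1, …, S_m) be two relational structures on the same set A, and let I = (V, 𝒞) be an instance of CSP(𝔸). Assume r, s are positive integers and J = (W, 𝒟) is an instance of CSP(𝔹) such that 𝒫_𝔸^s(I) ⊢ J and 𝒫_𝔹^r(J) ⊢ G. Then 𝒫_𝔸^{r+s}(I) ⊢ G. -/

import Mathlib

namespace CSPPaper

/-- A relational structure on `A`: a family of finitary relations (the basic
relations), a relation of arity `n` being a set of `n`-tuples `Fin n → A`. -/
structure RelStruct (A : Type) where
  basic : Set (Σ n : ℕ, Set (Fin n → A))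

/-- A CSP instance with variables `V` over domain `A`: a set of constraints,
each consisting of a scope (a tuple of variables) and a constraint relation. -/
structure Instance (A : Type) (V : Type) where
  constraints : Set (Σ n : ℕ, (Fin n → V) × Set (Fin n → A))

/-- `f : V → A` is a solution of the instance `I`. -/
def Instance.Sol {A V : Type} (I : Instance A V) (f : V → A) : Prop :=
  ∀ c ∈ I.constraints, (fun i => f (c.2.1 i)) ∈ c.2.2

def Instance.Satisfiable {A V : Type} (I : Instance A V) : Prop :=
  ∃ f, I.Sol f

/-- `I` is an instance of `CSP(𝔸)`: all its constraint relations are basic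
relations of `𝔸`. -/
def IsCSPInstance {A V : Type} (𝔸 : RelStruct A) (I : Instance A V) : Prop :=
  ∀ c ∈ I.constraints, (⟨c.1, c.2.2⟩ : Σ n : ℕ, Set (Fin n → A)) ∈ 𝔸.basic

/-- An atom of a Datalog rule over the variable set `Fin r`: a predicate
(a relation on `A`) applied to a tuple of variables. -/
structure Atom (A : Type) (r : ℕ) where
  arity : ℕ
  scope : Fin arity → Fin r
  rel : Set (Fin arity → A)

def Atom.holds {A : Type} {r : ℕ} (a : Atom A r) (f : Fin r → A) : Prop :=
  (fun i => f (a.scope i)) ∈ a.rel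

/-- A rule of the `r`-ary maximal symmetric Datalog program `𝒫_𝔸^r` consistent
with `𝔸`: a linear Datalog rule on at most `r` variables, whose head is an IDB
(an arbitrary relation on `A` of arity at most `r`), whose body contains at most
one IDB atom (`idb`) and otherwise non-IDB atoms for basic relations of `𝔸`
of arity at most `r` (`edb`, without repetition), such that the rule is
consistent with `𝔸`, and, if the body contains an IDB atom, its mirror image is
also consistent with `𝔸`. -/
structure Rule (A : Type) (𝔸 : RelStruct A) (r : ℕ) where
  head : Atom A r
  idb : Option (Atom A r)
  edb : List (Atom A r)
  head_arity : head.arity ≤ r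
  idb_arity : ∀ a ∈ idb, a.arity ≤ r
  edb_arity : ∀ a ∈ edb, a.arity ≤ r
  edb_basic : ∀ a ∈ edb, (⟨a.arity, a.rel⟩ : Σ n : ℕ, Set (Fin n → A)) ∈ 𝔸.basic
  nodup : edb.Nodup
  consistent : ∀ f : Fin r → A,
    (∀ a ∈ idb, a.holds f) → (∀ a ∈ edb, a.holds f) → head.holds f
  mirror : ∀ a ∈ idb, ∀ f : Fin r → A,
    head.holds f → (∀ b ∈ edb, b.holds f) → a.holds f

/-- `Derives 𝔸 r I ρ R`: the `r`-ary maximal symmetric Datalog program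
`𝒫_𝔸^r` consistent with `𝔸`, run on the instance `I`, derives `R(ρ)`.
This holds if `(ρ, R)` is a constraint of `I`, or if some rule of `𝒫_𝔸^r`
with head `R(τ)` admits an evaluation `ω` of its variables into `V` with
`ω ∘ τ = ρ`, whose (at most one) IDB body atom is derived and whose non-IDB
body atoms are constraints of `I` under `ω`. -/
inductive Derives {A V : Type} (𝔸 : RelStruct A) (r : ℕ) (I : Instance A V) :
    ∀ {n : ℕ}, (Fin n → V) → Set (Fin n → A) → Prop
  | base {n : ℕ} (ρ : Fin n → V) (R : Set (Fin n → A)) :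
      (⟨n, ρ, R⟩ : Σ n : ℕ, (Fin n → V) × Set (Fin n → A)) ∈ I.constraints →
      Derives 𝔸 r I ρ R
  | step (rule : Rule A 𝔸 r) (ω : Fin r → V) :
      (∀ a ∈ rule.idb, Derives 𝔸 r I (fun i => ω (a.scope i)) a.rel) →
      (∀ a ∈ rule.edb,
        (⟨a.arity, fun i => ω (a.scope i), a.rel⟩ :
          Σ n : ℕ, (Fin n → V) × Set (Fin n → A)) ∈ I.constraints) →
      Derives 𝔸 r I (fun i => ω (rule.head.scope i)) rule.head.rel

/-- `𝒫_𝔸^r(I) ⊢ G`: the program derives a goal predicate, i.e. an empty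
relation of arity at most `r`. -/
def DerivesGoal {A V : Type} (𝔸 : RelStruct A) (r : ℕ) (I : Instance A V) : Prop :=
  ∃ (n : ℕ) (ρ : Fin n → V), n ≤ r ∧ Derives 𝔸 r I ρ (∅ : Set (Fin n → A))

/-- `𝒫_𝔸^r(I) ⊢ J`: the program run on `I` derives every constraint of `J`. -/
def DerivesInstance {A V : Type} (𝔸 : RelStruct A) (r : ℕ) (I J : Instance A V) : Prop :=
  ∀ c ∈ J.constraints, Derives 𝔸 r I c.2.1 c.2.2

/-- An `m`-ary operation `t` preserves the `n`-ary relation `R`. -/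
def PreservesRel {A : Type} {m n : ℕ} (t : (Fin m → A) → A) (R : Set (Fin n → A)) : Prop :=
  ∀ rows : Fin m → Fin n → A, (∀ j, rows j ∈ R) → (fun i => t (fun j => rows j i)) ∈ R

/-- A polymorphism of `𝔸`: an operation preserving all basic relations. -/
def IsPolymorphism {A : Type} {m : ℕ} (𝔸 : RelStruct A) (t : (Fin m → A) → A) : Prop :=
  ∀ R ∈ 𝔸.basic, PreservesRel t R.2

def ternaryOp {A : Type} (p : A → A → A → A) : (Fin 3 → A) → A :=
  fun v => p (v 0) (v 1) (v 2)

/-- A chain of `n` Hagemann–Mitschke terms: idempotent ternary operations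
`p 0, …, p n` with `p 0 x y z = x`, `p k x x y = p (k+1) x y y`, `p n x y z = z`. -/
def IsHMChain {A : Type} (n : ℕ) (p : ℕ → A → A → A → A) : Prop :=
  (∀ k ≤ n, ∀ x : A, p k x x x = x) ∧
  (∀ x y z : A, p 0 x y z = x) ∧
  (∀ x y z : A, p n x y z = z) ∧
  (∀ k < n, ∀ x y : A, p k x x y = p (k + 1) x y y)

def Pres3Set {A : Type} (p : A → A → A → A) (S : Set A) : Prop :=
  ∀ x y z, x ∈ S → y ∈ S → z ∈ S → p x y z ∈ S

def Pres3Rel {A : Type} (p : A → A → A → A) (E : Set (A × A)) : Prop :=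
  ∀ u v w, u ∈ E → v ∈ E → w ∈ E → (p u.1 v.1 w.1, p u.2 v.2 w.2) ∈ E

def PresOpSet {A : Type} {m : ℕ} (t : (Fin m → A) → A) (S : Set A) : Prop :=
  ∀ x : Fin m → A, (∀ j, x j ∈ S) → t x ∈ S

def PresOpRel {A : Type} {m : ℕ} (t : (Fin m → A) → A) (E : Set (A × A)) : Prop :=
  ∀ x y : Fin m → A, (∀ j, (x j, y j) ∈ E) → (t x, t y) ∈ E

/-- A path instance of length `len`: variables `1, …, len`, one unary
constraint `B i` on each variable `i ∈ [1, len]`, and one binary constraint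
`E i` with scope `(i, i+1)` for each `i ∈ [1, len-1]`. -/
structure PathInstance (A : Type) where
  len : ℕ
  B : ℕ → Set A
  E : ℕ → Set (A × A)

/-- A solution of the subinstance of the path instance `I` induced by `[a, b]`. -/
def IsSolutionOn {A : Type} (I : PathInstance A) (a b : ℕ) (s : ℕ → A) : Prop :=
  (∀ i, a ≤ i → i ≤ b → s i ∈ I.B i) ∧
  (∀ i, a ≤ i → i + 1 ≤ b → (s i, s (i + 1)) ∈ I.E i)

def IsSolution {A : Type} (I : PathInstance A) (s : ℕ → A) : Prop :=
  IsSolutionOn I 1 I.len s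

def unaryRel {A : Type} (S : Set A) : Set (Fin 1 → A) := {f | f 0 ∈ S}

def pairRel {A : Type} (E : Set (A × A)) : Set (Fin 2 → A) := {f | (f 0, f 1) ∈ E}

/-- The path instance `I`, presented as a CSP instance on the variable set `ℕ`. -/
def PathInstance.toInstance {A : Type} (I : PathInstance A) : Instance A ℕ where
  constraints :=
    {c | (∃ i, 1 ≤ i ∧ i ≤ I.len ∧
            c = ⟨1, fun _ => i, unaryRel (I.B i)⟩) ∨
         (∃ i, 1 ≤ i ∧ i + 1 ≤ I.len ∧
            c = ⟨2, ![i, i + 1], pairRel (I.E i)⟩)}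

/-- An `n`-braid in the path instance `I`: solutions `s 0, …, s n` and indices
`1 ≤ idx 1 < … < idx n ≤ I.len` with `s k (idx k) = s (k+1) (idx k)` and
`s (k-1) (idx (k+1)) = s k (idx (k+1))` for `k = 1, …, n-1`. -/
def IsBraid {A : Type} (I : PathInstance A) (n : ℕ) (s : ℕ → ℕ → A) (idx : ℕ → ℕ) : Prop :=
  (∀ k ≤ n, IsSolution I (s k)) ∧
  1 ≤ idx 1 ∧ idx n ≤ I.len ∧
  (∀ k, 1 ≤ k → k < n → idx k < idx (k + 1)) ∧
  (∀ k, 1 ≤ k → k + 1 ≤ n →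
    s k (idx k) = s (k + 1) (idx k) ∧ s (k - 1) (idx (k + 1)) = s k (idx (k + 1)))

/-- The binary constraint of `I` with scope `(i, i+1)` is subdirect. -/
def SubdirectAt {A : Type} (I : PathInstance A) (i : ℕ) : Prop :=
  (I.B i).Nonempty ∧ (I.B (i + 1)).Nonempty ∧
  (∀ a ∈ I.B i, ∃ b ∈ I.B (i + 1), (a, b) ∈ I.E i) ∧
  (∀ b ∈ I.B (i + 1), ∃ a ∈ I.B i, (a, b) ∈ I.E i)

/-- The subinstance of `I` induced by `[a, b]` is subdirect. -/
def SubdirectOn {A : Type} (I : PathInstance A) (a b : ℕ) : Prop :=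
  ∀ i, a ≤ i → i + 1 ≤ b → SubdirectAt I i

def Subdirect {A : Type} (I : PathInstance A) : Prop := SubdirectOn I 1 I.len

/-- The sets `C_i`: `C 1 = B 1` and
`C (i+1) = {b ∈ B (i+1) | ∃ c ∈ C i, (c, b) ∈ E i}`. -/
def reachSet {A : Type} (I : PathInstance A) : ℕ → Set A
  | 0 => ∅
  | 1 => I.B 1
  | (i + 2) => {b ∈ I.B (i + 2) | ∃ c ∈ reachSet I (i + 1), (c, b) ∈ I.E (i + 1)}

/-- `B_{i,i+1}` contains a backward edge: an edge `(b, c) ∈ E i` with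
`b ∈ B i \ C i` and `c ∈ C (i+1)`. -/
def BackwardAt {A : Type} (I : PathInstance A) (i : ℕ) : Prop :=
  1 ≤ i ∧ i + 1 ≤ I.len ∧
  ∃ b c, (b, c) ∈ I.E i ∧ b ∈ I.B i ∧ b ∉ reachSet I i ∧ c ∈ reachSet I (i + 1)

/-- Adjacency in the graph `Conn(I_{[lo,hi]})`: its vertices are pairs `(i, a)`
with `a ∈ B i`, `lo ≤ i ≤ hi`, and `(i, a)` is adjacent to `(i+1, b)` whenever
`(a, b) ∈ E i`. -/
def connAdj {A : Type} (I : PathInstance A) (lo hi : ℕ) (p q : ℕ × A) : Prop :=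
  lo ≤ p.1 ∧ p.1 + 1 ≤ hi ∧ q.1 = p.1 + 1 ∧
  p.2 ∈ I.B p.1 ∧ q.2 ∈ I.B q.1 ∧ (p.2, q.2) ∈ I.E p.1

/-- `λ_{I,lo,hi}`: the pairs `(a, b) ∈ B lo × B hi` joined by an undirected path
in `Conn(I_{[lo,hi]})`. -/
def lamRel {A : Type} (I : PathInstance A) (lo hi : ℕ) : Set (A × A) :=
  {ab | ab.1 ∈ I.B lo ∧ ab.2 ∈ I.B hi ∧
    Relation.ReflTransGen (fun p q => connAdj I lo hi p q ∨ connAdj I lo hi q p)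
      (lo, ab.1) (hi, ab.2)}

open Classical in
/-- The variable set `U` of the instance `I_λ`: the variables `1`, `len`, and
`i, i+1` for every index `i` such that `B_{i,i+1}` has a backward edge. -/
noncomputable def lamVars {A : Type} (I : PathInstance A) : Finset ℕ :=
  (Finset.Icc 1 I.len).filter
    (fun v => v = 1 ∨ v = I.len ∨ BackwardAt I v ∨ (2 ≤ v ∧ BackwardAt I (v - 1)))

/-- The `t`-th smallest element of `U` (`1`-indexed). -/
noncomputable def lamEnum {A : Type} (I : PathInstance A) (t : ℕ) : ℕ :=
  ((lamVars I).sort (· ≤ ·)).getD (t - 1) 0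

/-- The instance `I_λ`, presented as a path instance whose `t`-th variable is
the `t`-th smallest element of `U`: it consists of the subinstance of `I`
induced by `U`, where each gap between consecutive elements `u < w` of `U` with
`w > u + 1` is filled by the binary constraint `λ_{I,u,w}`. -/
noncomputable def lamInst {A : Type} (I : PathInstance A) : PathInstance A where
  len := (lamVars I).card
  B := fun t => I.B (lamEnum I t)
  E := fun t =>
    if lamEnum I (t + 1) = lamEnum I t + 1 then I.E (lamEnum I t)
    else lamRel I (lamEnum I t) (lamEnum I (t + 1))

/-- Unpacking an `m`-tuple of elements of `V^k` into an `m*k`-tuple of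
elements of `V`. -/
def unpackTuple {X : Type} {m k : ℕ} (σ : Fin m → Fin k → X) : Fin (m * k) → X :=
  fun t => σ t.divNat t.modNat

/-- Unpacking an `m`-ary relation on `A^k` into an `m*k`-ary relation on `A`. -/
def unpackRel {A : Type} {m k : ℕ} (U : Set (Fin m → Fin k → A)) :
    Set (Fin (m * k) → A) :=
  {t | ∃ u ∈ U, ∀ i : Fin (m * k), t i = u i.divNat i.modNat}

/-- The instance `I` has pathwidth at most `p`. -/
def PathwidthLE {A V : Type} (I : Instance A V) (p : ℕ) : Prop :=
  ∃ (m : ℕ) (U : Fin m → Set V),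
    (∀ v : V, ∃ i, v ∈ U i) ∧
    (∀ i, (U i).Finite ∧ (U i).ncard ≤ p + 1) ∧
    (∀ i j q : Fin m, i ≤ q → q ≤ j → ∀ v, v ∈ U i → v ∈ U j → v ∈ U q) ∧
    (∀ c ∈ I.constraints, ∃ i, Set.range c.2.1 ⊆ U i)

/-- `𝔸` has pathwidth duality `p`: for every unsatisfiable instance `I` of
`CSP(𝔸)` there is an unsatisfiable instance `J` of `CSP(𝔸)` of pathwidth at
most `p` such that identifying some variables of `J` (along `h`) yields a
subinstance of `I`. -/
def HasPathwidthDuality {A : Type} (𝔸 : RelStruct A) (p : ℕ) : Prop :=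
  ∀ (V : Type) (I : Instance A V), IsCSPInstance 𝔸 I → ¬I.Satisfiable →
    ∃ (W : Type) (J : Instance A W) (h : W → V),
      IsCSPInstance 𝔸 J ∧ ¬J.Satisfiable ∧ PathwidthLE J p ∧
      ∀ c ∈ J.constraints,
        (⟨c.1, fun i => h (c.2.1 i), c.2.2⟩ :
          Σ n : ℕ, (Fin n → V) × Set (Fin n → A)) ∈ I.constraints

/-- The `k`-th bubble power `𝔸^(k)` of `𝔸`: the relational structure on `A^k`
whose basic relations are all unary relations definable as conjunctions of
basic relations of `𝔸` (with identification of variables and dummy variables,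
but no existential quantification), and all binary relations
`E_ℐ = {(a, b) | ∀ (i,j) ∈ ℐ, a i = b j}` for `ℐ ⊆ [k]²`. -/
def bubblePower {A : Type} (𝔸 : RelStruct A) (k : ℕ) : RelStruct (Fin k → A) where
  basic :=
    {r | (∃ L : Set (Σ n : ℕ, (Fin n → Fin k) × Set (Fin n → A)),
            (∀ c ∈ L, (⟨c.1, c.2.2⟩ : Σ n : ℕ, Set (Fin n → A)) ∈ 𝔸.basic) ∧
            r = ⟨1, {f : Fin 1 → (Fin k → A) |
                      ∀ c ∈ L, (fun i => f 0 (c.2.1 i)) ∈ c.2.2}⟩) ∨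
         (∃ Idx : Set (Fin k × Fin k),
            r = ⟨2, {f : Fin 2 → (Fin k → A) | ∀ q ∈ Idx, f 0 q.1 = f 1 q.2}⟩)}


section Stacking

namespace Stack

variable {A V : Type}

/-- Append of two tuples. -/
def app {X : Type} {a b : ℕ} (u : Fin a → X) (v : Fin b → X) : Fin (a + b) → X :=
  Fin.addCases u v

@[simp] lemma app_left {X : Type} {a b : ℕ} (u : Fin a → X) (v : Fin b → X) (i : Fin a) :
    app u v (Fin.castAdd b i) = u i := by simp [app]

@[simp] lemma app_right {X : Type} {a b : ℕ} (u : Fin a → X) (v : Fin b → X) (i : Fin b) :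
    app u v (Fin.natAdd a i) = v i := by simp [app]

/-- Pullback of a relation along a variable map. -/
def pb {n m : ℕ} (σ : Fin n → Fin m) (C : Set (Fin n → A)) : Set (Fin m → A) :=
  {q | (fun i => q (σ i)) ∈ C}

@[simp] lemma mem_pb {n m : ℕ} (σ : Fin n → Fin m) (C : Set (Fin n → A)) (q : Fin m → A) :
    q ∈ pb σ C ↔ (fun i => q (σ i)) ∈ C := Iff.rfl

/-- Join (product) of two relations. -/
def join {a n : ℕ} (Q : Set (Fin a → A)) (C : Set (Fin n → A)) : Set (Fin (a + n) → A) :=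
  {g | (fun i => g (Fin.castAdd n i)) ∈ Q ∧ (fun j => g (Fin.natAdd a j)) ∈ C}

@[simp] lemma mem_join {a n : ℕ} (Q : Set (Fin a → A)) (C : Set (Fin n → A))
    (g : Fin (a + n) → A) :
    g ∈ join Q C ↔ (fun i => g (Fin.castAdd n i)) ∈ Q ∧ (fun j => g (Fin.natAdd a j)) ∈ C :=
  Iff.rfl

lemma _root_.CSPPaper.Derives.cast {𝔸 : RelStruct A} {t : ℕ} {I : Instance A V} {n : ℕ}
    {ρ ρ' : Fin n → V} {R : Set (Fin n → A)}
    (h : Derives 𝔸 t I ρ R) (e : ρ = ρ') : Derives 𝔸 t I ρ' R := e ▸ h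

lemma derives_cases {𝔸 : RelStruct A} {t : ℕ} {I : Instance A V} {n : ℕ}
    {ρ : Fin n → V} {R : Set (Fin n → A)} (h : Derives 𝔸 t I ρ R) :
    ((⟨n, ρ, R⟩ : Σ k : ℕ, (Fin k → V) × Set (Fin k → A)) ∈ I.constraints) ∨
      (n ≤ t ∧ Derives 𝔸 t I ρ R) := by
  cases h with
  | base ρ R hmem => exact Or.inl hmem
  | step rule ω hi he => exact Or.inr ⟨rule.head_arity, Derives.step rule ω hi he⟩

/-- A derivation step whose rule is an "iff" rewriting (no EDB, mirror automatic). -/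
lemma iffStep {𝔸 : RelStruct A} {t : ℕ} {I : Instance A V} {m n : ℕ}
    (θ : Fin n → Fin t) (θ' : Fin m → Fin t)
    (H : Set (Fin n → A)) (P : Set (Fin m → A))
    (hn : n ≤ t) (hm : m ≤ t)
    (hiff : ∀ f : Fin t → A, ((fun i => f (θ' i)) ∈ P ↔ (fun i => f (θ i)) ∈ H))
    (ω : Fin t → V) (hP : Derives 𝔸 t I (fun i => ω (θ' i)) P) :
    Derives 𝔸 t I (fun i => ω (θ i)) H := by
  refine Derives.step (𝔸 := 𝔸)
    { head := ⟨n, θ, H⟩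
      idb := some ⟨m, θ', P⟩
      edb := []
      head_arity := hn
      idb_arity := by rintro a ha; obtain rfl := Option.mem_some_iff.mp ha; exact hm
      edb_arity := by simp
      edb_basic := by simp
      nodup := List.nodup_nil
      consistent := by
        intro f hidb _
        exact (hiff f).mp (hidb _ (Option.mem_some_iff.mpr rfl))
      mirror := by
        intro a ha f hH _
        obtain rfl := Option.mem_some_iff.mp ha
        exact (hiff f).mpr hH }
    ω ?_ ?_
  · intro a ha
    obtain rfl := Option.mem_some_iff.mp ha
    exact hP
  · simp

/-- A derivation step with one EDB atom and one IDB atom. -/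
lemma edbStep {𝔸 : RelStruct A} {t : ℕ} {I : Instance A V} {p m n : ℕ}
    (θH : Fin p → Fin t) (θI : Fin m → Fin t) (θE : Fin n → Fin t)
    (H : Set (Fin p → A)) (P : Set (Fin m → A)) (C : Set (Fin n → A))
    (hp : p ≤ t) (hm : m ≤ t) (hn : n ≤ t)
    (hbasic : (⟨n, C⟩ : Σ k : ℕ, Set (Fin k → A)) ∈ 𝔸.basic)
    (hcons : ∀ f : Fin t → A,
      (fun i => f (θI i)) ∈ P → (fun i => f (θE i)) ∈ C → (fun i => f (θH i)) ∈ H)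
    (hmir : ∀ f : Fin t → A,
      (fun i => f (θH i)) ∈ H → (fun i => f (θE i)) ∈ C → (fun i => f (θI i)) ∈ P)
    (ω : Fin t → V)
    (hP : Derives 𝔸 t I (fun i => ω (θI i)) P)
    (hcon : (⟨n, fun i => ω (θE i), C⟩ : Σ k : ℕ, (Fin k → V) × Set (Fin k → A))
      ∈ I.constraints) :
    Derives 𝔸 t I (fun i => ω (θH i)) H := by
  refine Derives.step (𝔸 := 𝔸)
    { head := ⟨p, θH, H⟩
      idb := some ⟨m, θI, P⟩
      edb := [⟨n, θE, C⟩]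
      head_arity := hp
      idb_arity := by rintro a ha; obtain rfl := Option.mem_some_iff.mp ha; exact hm
      edb_arity := by simp [hn]
      edb_basic := by simpa using hbasic
      nodup := List.nodup_singleton _
      consistent := by
        intro f hi he
        exact hcons f (hi _ (Option.mem_some_iff.mpr rfl)) (he ⟨n, θE, C⟩ (by simp))
      mirror := by
        intro a ha f hH he
        obtain rfl := Option.mem_some_iff.mp ha
        exact hmir f hH (he ⟨n, θE, C⟩ (by simp)) }
    ω ?_ ?_
  · intro a ha
    obtain rfl := Option.mem_some_iff.mp ha
    exact hP
  · intro a ha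
    obtain rfl : a = ⟨n, θE, C⟩ := by simpa using ha
    exact hcon

end Stack
end Stacking
section Stacking2
namespace Stack

variable {A V : Type}

def liftAtom {t u : ℕ} (e : Fin t → Fin u) (a : Atom A t) : Atom A u :=
  ⟨a.arity, fun i => e (a.scope i), a.rel⟩

lemma liftAtom_inj {t u : ℕ} {e : Fin t → Fin u} (he : Function.Injective e) :
    Function.Injective (liftAtom (A := A) e) := by
  rintro ⟨n, s1, r1⟩ ⟨m, s2, r2⟩ h
  simp only [liftAtom, Atom.mk.injEq] at h
  obtain ⟨rfl, h2, h3⟩ := h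
  have h2' := eq_of_heq h2
  have h3' := eq_of_heq h3
  have hs : s1 = s2 := funext fun i => he (congrFun h2' i)
  simp [hs, h3']

lemma liftAtom_holds {t u : ℕ} (e : Fin t → Fin u) (a : Atom A t) (f : Fin u → A) :
    (liftAtom e a).holds f ↔ a.holds (fun j => f (e j)) := Iff.rfl

/-- Monotonicity of derivability in the arity bound. -/
lemma derives_mono {𝔸 : RelStruct A} {I : Instance A V} {t u : ℕ}
    (ht : 1 ≤ t) (htu : t ≤ u) {n : ℕ} {ρ : Fin n → V} {R : Set (Fin n → A)}
    (h : Derives 𝔸 t I ρ R) : Derives 𝔸 u I ρ R := by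
  induction h with
  | base ρ R hmem => exact Derives.base ρ R hmem
  | step rule ωt hidb hedb ih =>
    have he : Function.Injective (Fin.castLE htu) := fun a b hab =>
      Fin.ext (by simpa using congrArg Fin.val hab)
    set e : Fin t → Fin u := Fin.castLE htu with he_def
    set ω' : Fin u → V := fun i => if h : (i : ℕ) < t then ωt ⟨i, h⟩ else ωt ⟨0, ht⟩ with hω'
    have hω : ∀ j : Fin t, ω' (e j) = ωt j := by
      intro j
      have hj : ((e j : Fin u) : ℕ) = (j : ℕ) := rfl
      simp only [hω', hj, j.isLt, dif_pos, Fin.eta]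
    refine Derives.cast (Derives.step (𝔸 := 𝔸)
      { head := liftAtom e rule.head
        idb := rule.idb.map (liftAtom e)
        edb := rule.edb.map (liftAtom e)
        head_arity := rule.head_arity.trans htu
        idb_arity := by
          intro a ha
          simp only [Option.mem_map] at ha  -- may need adjusting
          obtain ⟨b, hb, rfl⟩ := ha
          exact (rule.idb_arity b hb).trans htu
        edb_arity := by
          intro a ha
          simp only [List.mem_map] at ha
          obtain ⟨b, hb, rfl⟩ := ha
          exact (rule.edb_arity b hb).trans htu
        edb_basic := by
          intro a ha
          simp only [List.mem_map] at ha
          obtain ⟨b, hb, rfl⟩ := ha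
          exact rule.edb_basic b hb
        nodup := rule.nodup.map (liftAtom_inj he)
        consistent := by
          intro f hi hE
          refine rule.consistent (fun j => f (e j)) ?_ ?_
          · intro a ha
            exact hi (liftAtom e a) (by simp only [Option.mem_map]; exact ⟨a, ha, rfl⟩)
          · intro a ha
            exact hE (liftAtom e a) (List.mem_map_of_mem ha)
        mirror := by
          intro a ha f hH hE
          simp only [Option.mem_map] at ha
          obtain ⟨b, hb, rfl⟩ := ha
          exact rule.mirror b hb (fun j => f (e j)) hH
            (fun c hc => hE (liftAtom e c) (List.mem_map_of_mem hc)) }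
      ω' ?_ ?_) ?_
    · intro a ha
      simp only [Option.mem_map] at ha
      obtain ⟨b, hb, rfl⟩ := ha
      exact (ih b hb).cast (funext fun i => (hω (b.scope i)).symm)
    · intro a ha
      simp only [List.mem_map] at ha
      obtain ⟨b, hb, rfl⟩ := ha
      have etup : (fun i => ω' ((liftAtom e b).scope i)) = fun i => ωt (b.scope i) :=
        funext fun i => hω (b.scope i)
      rw [show ((⟨(liftAtom e b).arity, fun i => ω' ((liftAtom e b).scope i),
          (liftAtom e b).rel⟩ : Σ k : ℕ, (Fin k → V) × Set (Fin k → A)))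
        = ⟨b.arity, fun i => ωt (b.scope i), b.rel⟩ from by rw [etup]; rfl]
      exact hedb b hb
    · exact funext fun i => hω (rule.head.scope i)

end Stack
end Stacking2
section Stacking3
namespace Stack

variable {A V : Type} {𝔸 : RelStruct A} {I : Instance A V} {r s : ℕ}

/-- Lift an `s`-variable atom to the last `s` of `r+s` variables. -/
def eLift (r : ℕ) {s : ℕ} (a : Atom A s) : Atom A (r + s) :=
  liftAtom (Fin.natAdd r) a

lemma natAdd_inj (r s : ℕ) : Function.Injective (Fin.natAdd r : Fin s → Fin (r + s)) := by
  intro a b h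
  have := congrArg Fin.val h
  simp only [Fin.coe_natAdd] at this
  exact Fin.ext (Nat.add_left_cancel this)

/-- The join of a context relation `Q` on the first `r` variables with a lifted atom. -/
def joinAtom (Q : Set (Fin r → A)) (a : Atom A s) : Atom A (r + s) :=
  ⟨r + a.arity,
    app (fun i => Fin.castAdd s i) (fun j => Fin.natAdd r (a.scope j)),
    join Q a.rel⟩

lemma joinAtom_holds (Q : Set (Fin r → A)) (a : Atom A s) (f : Fin (r + s) → A) :
    (joinAtom Q a).holds f ↔
      ((fun i => f (Fin.castAdd s i)) ∈ Q ∧ a.holds (fun j => f (Fin.natAdd r j))) := by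
  simp only [joinAtom, Atom.holds, join]
  change (_ ∧ _) ↔ _
  constructor
  · rintro ⟨h1, h2⟩
    exact ⟨by simpa using h1, by simpa using h2⟩
  · rintro ⟨h1, h2⟩
    exact ⟨by simpa using h1, by simpa using h2⟩

/-- The context atom on the first `r` variables. -/
def ctxAtom (Q : Set (Fin r → A)) (s : ℕ) : Atom A (r + s) :=
  ⟨r, fun i => Fin.castAdd s i, Q⟩

lemma ctxAtom_holds (Q : Set (Fin r → A)) (f : Fin (r + s) → A) :
    (ctxAtom Q s).holds f ↔ (fun i => f (Fin.castAdd s i)) ∈ Q := Iff.rfl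

lemma joinAtom_tuple {X : Type} (Q : Set (Fin r → A)) (a : Atom A s)
    (ρQ : Fin r → X) (ωs : Fin s → X) :
    (fun i => app ρQ ωs ((joinAtom Q a).scope i)) = app ρQ (fun i => ωs (a.scope i)) := by
  funext i
  induction i using Fin.addCases with
  | left j => simp [joinAtom]
  | right j => simp [joinAtom]

/-- A derivation step using a rule of `𝒫_𝔸^s`, lifted to the last `s` of `r+s` variables,
with head and IDB atoms replaced by the given atoms. -/
lemma liftedStep (RB : Rule A 𝔸 s) (hd idn : Atom A (r + s))
    (hhd : hd.arity ≤ r + s) (hid : idn.arity ≤ r + s)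
    (hcons : ∀ f : Fin (r + s) → A, idn.holds f →
      (∀ c ∈ RB.edb, c.holds (fun j => f (Fin.natAdd r j))) → hd.holds f)
    (hmir : ∀ f : Fin (r + s) → A, hd.holds f →
      (∀ c ∈ RB.edb, c.holds (fun j => f (Fin.natAdd r j))) → idn.holds f)
    (ρQ : Fin r → V) (ωs : Fin s → V)
    (hidb : Derives 𝔸 (r + s) I (fun i => app ρQ ωs (idn.scope i)) idn.rel)
    (hedb : ∀ b ∈ RB.edb,
      (⟨b.arity, fun i => ωs (b.scope i), b.rel⟩ :
        Σ k : ℕ, (Fin k → V) × Set (Fin k → A)) ∈ I.constraints) :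
    Derives 𝔸 (r + s) I (fun i => app ρQ ωs (hd.scope i)) hd.rel := by
  refine Derives.step (𝔸 := 𝔸)
    { head := hd
      idb := some idn
      edb := RB.edb.map (eLift r)
      head_arity := hhd
      idb_arity := by rintro a ha; obtain rfl := Option.mem_some_iff.mp ha; exact hid
      edb_arity := by
        intro a ha
        simp only [List.mem_map] at ha
        obtain ⟨b, hb, rfl⟩ := ha
        exact (RB.edb_arity b hb).trans (Nat.le_add_left s r)
      edb_basic := by
        intro a ha
        simp only [List.mem_map] at ha
        obtain ⟨b, hb, rfl⟩ := ha
        exact RB.edb_basic b hb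
      nodup := RB.nodup.map (liftAtom_inj (natAdd_inj r s))
      consistent := by
        intro f hi hE
        exact hcons f (hi _ (Option.mem_some_iff.mpr rfl))
          (fun c hc => hE (eLift r c) (List.mem_map_of_mem hc))
      mirror := by
        intro a ha f hH hE
        obtain rfl := Option.mem_some_iff.mp ha
        exact hmir f hH (fun c hc => hE (eLift r c) (List.mem_map_of_mem hc)) }
    (app ρQ ωs) ?_ ?_
  · intro a ha
    obtain rfl := Option.mem_some_iff.mp ha
    exact hidb
  · intro a ha
    simp only [List.mem_map] at ha
    obtain ⟨b, hb, rfl⟩ := ha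
    have etup : (fun i => app ρQ ωs ((eLift r b).scope i)) = fun i => ωs (b.scope i) := by
      funext i; simp [eLift, liftAtom]
    rw [show ((⟨(eLift r b).arity, fun i => app ρQ ωs ((eLift r b).scope i),
        (eLift r b).rel⟩ : Σ k : ℕ, (Fin k → V) × Set (Fin k → A)))
      = ⟨b.arity, fun i => ωs (b.scope i), b.rel⟩ from by rw [etup]; rfl]
    exact hedb b hb

lemma dive_up_step_some (RB : Rule A 𝔸 s) (a : Atom A s) (hO : RB.idb = some a)
    (Q : Set (Fin r → A)) (ρQ : Fin r → V) (ωs : Fin s → V)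
    (hidb : Derives 𝔸 (r + s) I (app ρQ (fun i => ωs (a.scope i))) (join Q a.rel))
    (hedb : ∀ b ∈ RB.edb,
      (⟨b.arity, fun i => ωs (b.scope i), b.rel⟩ :
        Σ k : ℕ, (Fin k → V) × Set (Fin k → A)) ∈ I.constraints) :
    Derives 𝔸 (r + s) I (app ρQ (fun i => ωs (RB.head.scope i))) (join Q RB.head.rel) := by
  have hmem_a : a ∈ RB.idb := hO ▸ Option.mem_some_iff.mpr rfl
  have h := liftedStep RB (joinAtom Q RB.head) (joinAtom Q a)
    (Nat.add_le_add_left RB.head_arity r) (Nat.add_le_add_left (RB.idb_arity a hmem_a) r)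
    (fun f hi hE => by
      have h1 := (joinAtom_holds Q a f).mp hi
      refine (joinAtom_holds Q RB.head f).mpr ⟨h1.1, ?_⟩
      refine RB.consistent _ ?_ hE
      intro b hb
      rw [hO] at hb
      obtain rfl := Option.mem_some_iff.mp hb
      exact h1.2)
    (fun f hH hE => by
      have h1 := (joinAtom_holds Q RB.head f).mp hH
      exact (joinAtom_holds Q a f).mpr ⟨h1.1, RB.mirror a hmem_a _ h1.2 hE⟩)
    ρQ ωs (hidb.cast (joinAtom_tuple Q a ρQ ωs).symm) hedb
  exact h.cast (joinAtom_tuple Q RB.head ρQ ωs)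

lemma dive_up_step_none (RB : Rule A 𝔸 s) (hO : RB.idb = none)
    (Q : Set (Fin r → A)) (ρQ : Fin r → V) (ωs : Fin s → V)
    (hQ : Derives 𝔸 (r + s) I ρQ Q)
    (hedb : ∀ b ∈ RB.edb,
      (⟨b.arity, fun i => ωs (b.scope i), b.rel⟩ :
        Σ k : ℕ, (Fin k → V) × Set (Fin k → A)) ∈ I.constraints) :
    Derives 𝔸 (r + s) I (app ρQ (fun i => ωs (RB.head.scope i))) (join Q RB.head.rel) := by
  have h := liftedStep RB (joinAtom Q RB.head) (ctxAtom Q s)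
    (Nat.add_le_add_left RB.head_arity r) (Nat.le_add_right r s)
    (fun f hi hE => by
      refine (joinAtom_holds Q RB.head f).mpr ⟨hi, ?_⟩
      refine RB.consistent _ ?_ hE
      intro b hb
      rw [hO] at hb
      exact absurd hb (by simp))
    (fun f hH _ => ((joinAtom_holds Q RB.head f).mp hH).1)
    ρQ ωs (hQ.cast (funext fun i => (app_left ρQ ωs i).symm)) hedb
  exact h.cast (joinAtom_tuple Q RB.head ρQ ωs)

lemma dive_down_step_some (RB : Rule A 𝔸 s) (a : Atom A s) (hO : RB.idb = some a)
    (Q : Set (Fin r → A)) (ρQ : Fin r → V) (ωs : Fin s → V)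
    (hhead : Derives 𝔸 (r + s) I (app ρQ (fun i => ωs (RB.head.scope i)))
      (join Q RB.head.rel))
    (hedb : ∀ b ∈ RB.edb,
      (⟨b.arity, fun i => ωs (b.scope i), b.rel⟩ :
        Σ k : ℕ, (Fin k → V) × Set (Fin k → A)) ∈ I.constraints) :
    Derives 𝔸 (r + s) I (app ρQ (fun i => ωs (a.scope i))) (join Q a.rel) := by
  have hmem_a : a ∈ RB.idb := hO ▸ Option.mem_some_iff.mpr rfl
  have h := liftedStep RB (joinAtom Q a) (joinAtom Q RB.head)
    (Nat.add_le_add_left (RB.idb_arity a hmem_a) r) (Nat.add_le_add_left RB.head_arity r)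
    (fun f hi hE => by
      have h1 := (joinAtom_holds Q RB.head f).mp hi
      exact (joinAtom_holds Q a f).mpr ⟨h1.1, RB.mirror a hmem_a _ h1.2 hE⟩)
    (fun f hH hE => by
      have h1 := (joinAtom_holds Q a f).mp hH
      refine (joinAtom_holds Q RB.head f).mpr ⟨h1.1, ?_⟩
      refine RB.consistent _ ?_ hE
      intro b hb
      rw [hO] at hb
      obtain rfl := Option.mem_some_iff.mp hb
      exact h1.2)
    ρQ ωs (hhead.cast (joinAtom_tuple Q RB.head ρQ ωs).symm) hedb
  exact h.cast (joinAtom_tuple Q a ρQ ωs)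

lemma dive_down_step_none (RB : Rule A 𝔸 s) (hO : RB.idb = none)
    (Q : Set (Fin r → A)) (ρQ : Fin r → V) (ωs : Fin s → V)
    (hhead : Derives 𝔸 (r + s) I (app ρQ (fun i => ωs (RB.head.scope i)))
      (join Q RB.head.rel))
    (hedb : ∀ b ∈ RB.edb,
      (⟨b.arity, fun i => ωs (b.scope i), b.rel⟩ :
        Σ k : ℕ, (Fin k → V) × Set (Fin k → A)) ∈ I.constraints) :
    Derives 𝔸 (r + s) I ρQ Q := by
  have h := liftedStep RB (ctxAtom Q s) (joinAtom Q RB.head)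
    (Nat.le_add_right r s) (Nat.add_le_add_left RB.head_arity r)
    (fun f hi _ => ((joinAtom_holds Q RB.head f).mp hi).1)
    (fun f hH hE => by
      refine (joinAtom_holds Q RB.head f).mpr ⟨hH, ?_⟩
      refine RB.consistent _ ?_ hE
      intro b hb
      rw [hO] at hb
      exact absurd hb (by simp))
    ρQ ωs (hhead.cast (joinAtom_tuple Q RB.head ρQ ωs).symm) hedb
  exact h.cast (funext fun i => app_left ρQ ωs i)

end Stack
end Stacking3
section Stacking4
namespace Stack

variable {A V : Type} {𝔸 : RelStruct A} {I : Instance A V} {r s : ℕ}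

/-- Climb a `𝒫_𝔸^s` derivation carrying the context `Q` on the first `r` variables. -/
lemma dive_up (hr : 0 < r) (hI : IsCSPInstance 𝔸 I)
    (ρQ : Fin r → V) (Q : Set (Fin r → A)) (hQ : Derives 𝔸 (r + s) I ρQ Q) :
    ∀ {n : ℕ} {τ : Fin n → V} {C : Set (Fin n → A)},
      Derives 𝔸 s I τ C → n ≤ s →
        Derives 𝔸 (r + s) I (app ρQ τ) (join Q C) := by
  intro n τ C h
  induction h with
  | @base n ρ R hmem =>
    intro hn
    set τe : Fin s → V := fun j => if h : (j : ℕ) < n then ρ ⟨j, h⟩ else ρQ ⟨0, hr⟩ with hτe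
    have hτ : ∀ j : Fin n, τe (Fin.castLE hn j) = ρ j := by
      intro j
      have hlt : ((Fin.castLE hn j : Fin s) : ℕ) < n := by simpa using j.isLt
      rw [hτe]
      simp only [hlt, dif_pos]
      exact congrArg ρ (Fin.ext (by simp))
    have etup : (fun j : Fin n => app ρQ τe (Fin.natAdd r (Fin.castLE hn j))) = ρ :=
      funext fun j => by rw [app_right]; exact hτ j
    refine Derives.cast (edbStep
      (θH := app (fun i : Fin r => Fin.castAdd s i)
        (fun j : Fin n => Fin.natAdd r (Fin.castLE hn j)))
      (θI := fun i : Fin r => Fin.castAdd s i)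
      (θE := fun j : Fin n => Fin.natAdd r (Fin.castLE hn j))
      (join Q R) Q R
      (Nat.add_le_add_left hn r) (Nat.le_add_right r s) (hn.trans (Nat.le_add_left s r))
      (hI _ hmem)
      (fun f h1 h2 => ⟨by simpa using h1, by simpa using h2⟩)
      (fun f hJ _ => by simpa using hJ.1)
      (app ρQ τe) (hQ.cast (funext fun i => (app_left ρQ τe i).symm)) ?_) ?_
    · rw [show (⟨n, fun j => app ρQ τe (Fin.natAdd r (Fin.castLE hn j)), R⟩ :
          Σ k : ℕ, (Fin k → V) × Set (Fin k → A)) = ⟨n, ρ, R⟩ from by rw [etup]]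
      exact hmem
    · funext i
      induction i using Fin.addCases with
      | left j => simp
      | right j => simp [hτ j]
  | step rule ωs hi he ih =>
    intro _
    rcases hO : rule.idb with _ | a
    · exact dive_up_step_none rule hO Q ρQ ωs hQ he
    · have hmem : a ∈ rule.idb := hO ▸ Option.mem_some_iff.mpr rfl
      exact dive_up_step_some rule a hO Q ρQ ωs (ih a hmem (rule.idb_arity a hmem)) he

/-- Descend a `𝒫_𝔸^s` derivation, dropping its conclusion from the join and
recovering the bare context `Q`. -/
lemma dive_down (hr : 0 < r) (hI : IsCSPInstance 𝔸 I)
    (ρQ : Fin r → V) (Q : Set (Fin r → A)) :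
    ∀ {n : ℕ} {τ : Fin n → V} {C : Set (Fin n → A)},
      Derives 𝔸 s I τ C → n ≤ s →
        Derives 𝔸 (r + s) I (app ρQ τ) (join Q C) → Derives 𝔸 (r + s) I ρQ Q := by
  intro n τ C h
  induction h with
  | @base n ρ R hmem =>
    intro hn hJ
    set τe : Fin s → V := fun j => if h : (j : ℕ) < n then ρ ⟨j, h⟩ else ρQ ⟨0, hr⟩ with hτe
    have hτ : ∀ j : Fin n, τe (Fin.castLE hn j) = ρ j := by
      intro j
      have hlt : ((Fin.castLE hn j : Fin s) : ℕ) < n := by simpa using j.isLt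
      rw [hτe]
      simp only [hlt, dif_pos]
      exact congrArg ρ (Fin.ext (by simp))
    have etup : (fun j : Fin n => app ρQ τe (Fin.natAdd r (Fin.castLE hn j))) = ρ :=
      funext fun j => by rw [app_right]; exact hτ j
    have etupI : (fun i => app ρQ τe
        ((app (fun i : Fin r => Fin.castAdd s i)
          (fun j : Fin n => Fin.natAdd r (Fin.castLE hn j))) i)) = app ρQ ρ := by
      funext i
      induction i using Fin.addCases with
      | left j => simp
      | right j => simp [hτ j]
    refine Derives.cast (edbStep
      (θH := fun i : Fin r => Fin.castAdd s i)
      (θI := app (fun i : Fin r => Fin.castAdd s i)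
        (fun j : Fin n => Fin.natAdd r (Fin.castLE hn j)))
      (θE := fun j : Fin n => Fin.natAdd r (Fin.castLE hn j))
      Q (join Q R) R
      (Nat.le_add_right r s) (Nat.add_le_add_left hn r) (hn.trans (Nat.le_add_left s r))
      (hI _ hmem)
      (fun f hJ' _ => by simpa using hJ'.1)
      (fun f h1 h2 => ⟨by simpa using h1, by simpa using h2⟩)
      (app ρQ τe) (hJ.cast etupI.symm) ?_) ?_
    · rw [show (⟨n, fun j => app ρQ τe (Fin.natAdd r (Fin.castLE hn j)), R⟩ :
          Σ k : ℕ, (Fin k → V) × Set (Fin k → A)) = ⟨n, ρ, R⟩ from by rw [etup]]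
      exact hmem
    · exact funext fun i => app_left ρQ τe i
  | step rule ωs hi he ih =>
    intro _ hJ
    rcases hO : rule.idb with _ | a
    · exact dive_down_step_none rule hO Q ρQ ωs hJ he
    · have hmem : a ∈ rule.idb := hO ▸ Option.mem_some_iff.mpr rfl
      exact ih a hmem (rule.idb_arity a hmem)
        (dive_down_step_some rule a hO Q ρQ ωs hJ he)

/-- Absorb one `J`-constraint into the context. -/
lemma absorb_one (hr : 0 < r) (hI : IsCSPInstance 𝔸 I) (ωB : Fin r → V)
    (Q : Set (Fin r → A)) (hQ : Derives 𝔸 (r + s) I ωB Q)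
    {n : ℕ} (σ : Fin n → Fin r) (C : Set (Fin n → A)) (hnr : n ≤ r + s)
    (hC : Derives 𝔸 s I (fun i => ωB (σ i)) C) :
    Derives 𝔸 (r + s) I ωB (Q ∩ pb σ C) := by
  rcases derives_cases hC with hmem | ⟨hns, hC⟩
  · refine Derives.cast (edbStep
      (θH := fun i : Fin r => Fin.castAdd s i)
      (θI := fun i : Fin r => Fin.castAdd s i)
      (θE := fun j : Fin n => Fin.castAdd s (σ j))
      (Q ∩ pb σ C) Q C
      (Nat.le_add_right r s) (Nat.le_add_right r s) hnr (hI _ hmem)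
      (fun f h1 h2 => ⟨h1, h2⟩)
      (fun f h1 _ => h1.1)
      (app ωB (fun _ : Fin s => ωB ⟨0, hr⟩))
      (hQ.cast (funext fun i => (app_left ωB _ i).symm)) ?_) ?_
    · rw [show (⟨n, fun j => app ωB (fun _ : Fin s => ωB ⟨0, hr⟩) (Fin.castAdd s (σ j)), C⟩ :
          Σ k : ℕ, (Fin k → V) × Set (Fin k → A)) = ⟨n, fun i => ωB (σ i), C⟩ from by
        rw [show (fun j => app ωB (fun _ : Fin s => ωB ⟨0, hr⟩) (Fin.castAdd s (σ j)))
          = fun i => ωB (σ i) from funext fun j => app_left ωB _ (σ j)]]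
      exact hmem
    · exact funext fun i => app_left ωB _ i
  · have hJ := dive_up hr hI ωB Q hQ hC hns
    have etup : (fun i => app ωB (fun _ : Fin s => ωB ⟨0, hr⟩)
        ((app (fun i : Fin r => Fin.castAdd s i) (fun j : Fin n => Fin.castAdd s (σ j))) i))
        = app ωB (fun i => ωB (σ i)) := by
      funext i
      induction i using Fin.addCases with
      | left j => simp
      | right j => simp
    have h := iffStep
      (θ := fun i : Fin r => Fin.castAdd s i)
      (θ' := app (fun i : Fin r => Fin.castAdd s i) (fun j : Fin n => Fin.castAdd s (σ j)))
      (Q ∩ pb σ C) (join Q C)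
      (Nat.le_add_right r s) (Nat.add_le_add_left hns r)
      (fun f => by
        constructor
        · rintro ⟨h1, h2⟩
          exact ⟨by simpa using h1, by simpa using h2⟩
        · rintro ⟨h1, h2⟩
          exact ⟨by simpa using h1, by simpa using h2⟩)
      (app ωB (fun _ : Fin s => ωB ⟨0, hr⟩)) (hJ.cast etup.symm)
    exact h.cast (funext fun i => app_left ωB _ i)

/-- Peel one `J`-constraint off the context. -/
lemma peel_one (hr : 0 < r) (hI : IsCSPInstance 𝔸 I) (ωB : Fin r → V)
    (Q : Set (Fin r → A)) {n : ℕ} (σ : Fin n → Fin r) (C : Set (Fin n → A)) (hnr : n ≤ r + s)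
    (hC : Derives 𝔸 s I (fun i => ωB (σ i)) C)
    (hQ : Derives 𝔸 (r + s) I ωB (Q ∩ pb σ C)) :
    Derives 𝔸 (r + s) I ωB Q := by
  rcases derives_cases hC with hmem | ⟨hns, hC⟩
  · refine Derives.cast (edbStep
      (θH := fun i : Fin r => Fin.castAdd s i)
      (θI := fun i : Fin r => Fin.castAdd s i)
      (θE := fun j : Fin n => Fin.castAdd s (σ j))
      Q (Q ∩ pb σ C) C
      (Nat.le_add_right r s) (Nat.le_add_right r s) hnr (hI _ hmem)
      (fun f h1 _ => h1.1)
      (fun f h1 h2 => ⟨h1, h2⟩)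
      (app ωB (fun _ : Fin s => ωB ⟨0, hr⟩))
      (hQ.cast (funext fun i => (app_left ωB _ i).symm)) ?_) ?_
    · rw [show (⟨n, fun j => app ωB (fun _ : Fin s => ωB ⟨0, hr⟩) (Fin.castAdd s (σ j)), C⟩ :
          Σ k : ℕ, (Fin k → V) × Set (Fin k → A)) = ⟨n, fun i => ωB (σ i), C⟩ from by
        rw [show (fun j => app ωB (fun _ : Fin s => ωB ⟨0, hr⟩) (Fin.castAdd s (σ j)))
          = fun i => ωB (σ i) from funext fun j => app_left ωB _ (σ j)]]
      exact hmem
    · exact funext fun i => app_left ωB _ i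
  · have etup : (fun i => app ωB (fun _ : Fin s => ωB ⟨0, hr⟩)
        ((app (fun i : Fin r => Fin.castAdd s i) (fun j : Fin n => Fin.castAdd s (σ j))) i))
        = app ωB (fun i => ωB (σ i)) := by
      funext i
      induction i using Fin.addCases with
      | left j => simp
      | right j => simp
    have h := iffStep
      (θ := app (fun i : Fin r => Fin.castAdd s i) (fun j : Fin n => Fin.castAdd s (σ j)))
      (θ' := fun i : Fin r => Fin.castAdd s i)
      (join Q C) (Q ∩ pb σ C)
      (Nat.add_le_add_left hns r) (Nat.le_add_right r s)
      (fun f => by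
        constructor
        · rintro ⟨h1, h2⟩
          exact ⟨by simpa using h1, by simpa using h2⟩
        · rintro ⟨h1, h2⟩
          exact ⟨by simpa using h1, by simpa using h2⟩)
      (app ωB (fun _ : Fin s => ωB ⟨0, hr⟩))
      (hQ.cast (funext fun i => (app_left ωB _ i).symm))
    exact dive_down hr hI ωB Q hC hns (h.cast etup)

def interList (l : List (Atom A r)) (Q : Set (Fin r → A)) : Set (Fin r → A) :=
  l.foldr (fun a S => S ∩ pb a.scope a.rel) Q

lemma mem_interList (l : List (Atom A r)) (Q : Set (Fin r → A)) (q : Fin r → A) :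
    q ∈ interList l Q ↔ q ∈ Q ∧ ∀ a ∈ l, a.holds q := by
  induction l with
  | nil => simp [interList]
  | cons a l ih =>
    rw [show interList (a :: l) Q = interList l Q ∩ pb a.scope a.rel from rfl,
      Set.mem_inter_iff, ih]
    simp only [List.forall_mem_cons, mem_pb, Atom.holds]
    tauto

lemma absorb_list (hr : 0 < r) (hI : IsCSPInstance 𝔸 I) (ωB : Fin r → V)
    (l : List (Atom A r))
    (hl : ∀ a ∈ l, a.arity ≤ r ∧ Derives 𝔸 s I (fun i => ωB (a.scope i)) a.rel)
    (Q : Set (Fin r → A)) (hQ : Derives 𝔸 (r + s) I ωB Q) :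
    Derives 𝔸 (r + s) I ωB (interList l Q) := by
  induction l with
  | nil => exact hQ
  | cons a l ih =>
    exact absorb_one hr hI ωB _ (ih fun b hb => hl b (List.mem_cons_of_mem _ hb))
      a.scope a.rel ((hl a (List.mem_cons_self)).1.trans (Nat.le_add_right r s))
      (hl a (List.mem_cons_self)).2

lemma peel_list (hr : 0 < r) (hI : IsCSPInstance 𝔸 I) (ωB : Fin r → V)
    (l : List (Atom A r))
    (hl : ∀ a ∈ l, a.arity ≤ r ∧ Derives 𝔸 s I (fun i => ωB (a.scope i)) a.rel)
    (Q : Set (Fin r → A)) (hQ : Derives 𝔸 (r + s) I ωB (interList l Q)) :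
    Derives 𝔸 (r + s) I ωB Q := by
  induction l with
  | nil => exact hQ
  | cons a l ih =>
    refine ih (fun b hb => hl b (List.mem_cons_of_mem _ hb)) ?_
    exact peel_one hr hI ωB _ a.scope a.rel
      ((hl a (List.mem_cons_self)).1.trans (Nat.le_add_right r s))
      (hl a (List.mem_cons_self)).2 hQ

/-- Main simulation: every fact derivable by `𝒫_𝔹^r` from `J` is derivable by
`𝒫_𝔸^{r+s}` from `I`. -/
lemma main_sim (hr : 1 ≤ r) (hs : 1 ≤ s) (hI : IsCSPInstance 𝔸 I)
    {𝔹 : RelStruct A} {J : Instance A V} (h1 : DerivesInstance 𝔸 s I J)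
    {n : ℕ} {ρ : Fin n → V} {R : Set (Fin n → A)}
    (h : Derives 𝔹 r J ρ R) : Derives 𝔸 (r + s) I ρ R := by
  induction h with
  | base ρ R hmem => exact derives_mono hs (Nat.le_add_left s r) (h1 _ hmem)
  | step ruleB ωB hidb hedb ih =>
    have hl : ∀ a ∈ ruleB.edb,
        a.arity ≤ r ∧ Derives 𝔸 s I (fun i => ωB (a.scope i)) a.rel :=
      fun a ha => ⟨ruleB.edb_arity a ha, h1 _ (hedb a ha)⟩
    rcases hO : ruleB.idb with _ | a
    · -- no IDB in the 𝔹-rule: start from the full context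
      have hP0 : Derives 𝔸 (r + s) I ωB (Set.univ : Set (Fin r → A)) := by
        refine Derives.cast (Derives.step (𝔸 := 𝔸)
          { head := ⟨r, fun i => Fin.castAdd s i, Set.univ⟩
            idb := none
            edb := []
            head_arity := Nat.le_add_right r s
            idb_arity := by simp
            edb_arity := by simp
            edb_basic := by simp
            nodup := List.nodup_nil
            consistent := fun f _ _ => Set.mem_univ _
            mirror := by rintro a ha; exact absurd ha (by simp) }
          (app ωB (fun _ : Fin s => ωB ⟨0, hr⟩)) ?_ ?_) ?_
        · rintro a ha; exact absurd ha (by simp)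
        · simp
        · exact funext fun i => app_left ωB _ i
      have hX := absorb_list hr hI ωB ruleB.edb hl _ hP0
      have hXeq : interList ruleB.edb (Set.univ : Set (Fin r → A))
          = interList ruleB.edb (pb ruleB.head.scope ruleB.head.rel) := by
        ext q
        rw [mem_interList, mem_interList]
        constructor
        · rintro ⟨-, h2⟩
          refine ⟨ruleB.consistent q ?_ h2, h2⟩
          intro b hb
          rw [hO] at hb
          exact absurd hb (by simp)
        · rintro ⟨-, h2⟩
          exact ⟨trivial, h2⟩
      rw [hXeq] at hX
      have hPT := peel_list hr hI ωB ruleB.edb hl _ hX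
      have h := iffStep (𝔸 := 𝔸) (I := I)
        (θ := fun i => Fin.castAdd s (ruleB.head.scope i))
        (θ' := fun i : Fin r => Fin.castAdd s i)
        ruleB.head.rel (pb ruleB.head.scope ruleB.head.rel)
        (ruleB.head_arity.trans (Nat.le_add_right r s)) (Nat.le_add_right r s)
        (fun f => Iff.rfl)
        (app ωB (fun _ : Fin s => ωB ⟨0, hr⟩))
        (hPT.cast (funext fun i => (app_left ωB _ i).symm))
      exact h.cast (funext fun i => app_left ωB _ (ruleB.head.scope i))
    · have hmem : a ∈ ruleB.idb := hO ▸ Option.mem_some_iff.mpr rfl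
      have hP0 : Derives 𝔸 (r + s) I ωB (pb a.scope a.rel) := by
        have h := iffStep (𝔸 := 𝔸) (I := I)
          (θ := fun i : Fin r => Fin.castAdd s i)
          (θ' := fun i => Fin.castAdd s (a.scope i))
          (pb a.scope a.rel) a.rel
          (Nat.le_add_right r s) ((ruleB.idb_arity a hmem).trans (Nat.le_add_right r s))
          (fun f => Iff.rfl)
          (app ωB (fun _ : Fin s => ωB ⟨0, hr⟩))
          ((ih a hmem).cast (funext fun i => (app_left ωB _ (a.scope i)).symm))
        exact h.cast (funext fun i => app_left ωB _ i)
      have hX := absorb_list hr hI ωB ruleB.edb hl _ hP0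
      have hXeq : interList ruleB.edb (pb a.scope a.rel)
          = interList ruleB.edb (pb ruleB.head.scope ruleB.head.rel) := by
        ext q
        rw [mem_interList, mem_interList]
        constructor
        · rintro ⟨h1, h2⟩
          refine ⟨ruleB.consistent q ?_ h2, h2⟩
          intro b hb
          rw [hO] at hb
          obtain rfl := Option.mem_some_iff.mp hb
          exact h1
        · rintro ⟨h1, h2⟩
          exact ⟨ruleB.mirror a hmem q h1 h2, h2⟩
      rw [hXeq] at hX
      have hPT := peel_list hr hI ωB ruleB.edb hl _ hX
      have h := iffStep (𝔸 := 𝔸) (I := I)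
        (θ := fun i => Fin.castAdd s (ruleB.head.scope i))
        (θ' := fun i : Fin r => Fin.castAdd s i)
        ruleB.head.rel (pb ruleB.head.scope ruleB.head.rel)
        (ruleB.head_arity.trans (Nat.le_add_right r s)) (Nat.le_add_right r s)
        (fun f => Iff.rfl)
        (app ωB (fun _ : Fin s => ωB ⟨0, hr⟩))
        (hPT.cast (funext fun i => (app_left ωB _ i).symm))
      exact h.cast (funext fun i => app_left ωB _ (ruleB.head.scope i))

end Stack
end Stacking4
/-- stacking symmetric Datalog programs.
Let `𝔸` and `𝔹` be relational structures on the same set `A`, `I` an instance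
of `CSP(𝔸)`, `r, s` positive integers, and `J` an instance of `CSP(𝔹)` (on a
variable set `W ⊆ V`) with `𝒫_𝔸^s(I) ⊢ J` and `𝒫_𝔹^r(J) ⊢ G`.
Then `𝒫_𝔸^{r+s}(I) ⊢ G`. -/
theorem statement2 {A V : Type} [Finite A] (𝔸 𝔹 : RelStruct A)
    (I J : Instance A V)
    (hI : IsCSPInstance 𝔸 I) (hJ : IsCSPInstance 𝔹 J)
    (r s : ℕ) (hr : 1 ≤ r) (hs : 1 ≤ s)
    (h1 : DerivesInstance 𝔸 s I J)
    (h2 : DerivesGoal 𝔹 r J) :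
    DerivesGoal 𝔸 (r + s) I := by
  obtain ⟨n, ρ, hn, hd⟩ := h2
  exact ⟨n, ρ, hn.trans (Nat.le_add_right r s), Stack.main_sim hr hs hI h1 hd⟩

end CSPPaper
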